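/- The act-violation modality is not closed under logical consequence of its argument: there exist a model M, state s, and formulas φ, ψ such that φ → ψ holds everywhere in M and Viol^a_{i,a}(t_b, t_v, φ) holds at s, but Viol^a_{i,a}(t_b, t_v, ψ) fails at s. The failure arises because φ → ψ does not guarantee ψ → V_{i,a} on the interval [t_b, t_v]. -/
import Mathlib


open scoped Classical

/-- Tree-shaped Kripke model for a fixed norm `i` and agent `a`, as in
"Linking sanctions to norms in practice".  `V`, `D`, `Rep`, `Pun` are the
violation / deadline / repair / punishment markers `V_{i,a}`, `D_{i,a}`,
`R_{i,a}`, `P_{i,a}`; `Ra` are the transitions labelled with agent `a`. -/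
structure NormModel where
  W : Type
  root : W
  R : W → W → Prop
  Ra : W → W → Prop
  hRa : ∀ s s', Ra s s' → R s s'
  depth : W → ℕ
  hroot : depth root = 0
  hdepth : ∀ s s', R s s' → depth s' = depth s + 1
  predUnique : ∀ s' s₁ s₂, R s₁ s' → R s₂ s' → s₁ = s₂
  reach : ∀ s, Relation.ReflTransGen R root s
  V : W → Prop
  D : W → Prop
  Rep : W → Prop
  Pun : W → Prop

namespace NormModel

/-- A path: an infinite `R`-sequence starting at the root. -/
def IsPath (M : NormModel) (σ : ℕ → M.W) : Prop :=
  σ 0 = M.root ∧ ∀ n, M.R (σ n) (σ (n + 1))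

/-- Paths through a state `s`. -/
def PathThrough (M : NormModel) (σ : ℕ → M.W) (s : M.W) : Prop :=
  M.IsPath σ ∧ σ (M.depth s) = s

/-- STIT operator `E_a φ`: `φ` holds at all `a`-successors, and `φ` is not
globally true (the non-triviality condition `M, w ⊨ ¬AG⁺φ`). -/
def Ea (M : NormModel) (φ : M.W → Prop) (s : M.W) : Prop :=
  (∀ s', M.Ra s s' → φ s') ∧ ¬ (∀ s', φ s')

/-- Act-violation `Viol^a_{i,a}(t_b, t_v, φ)` at `s`:
(1) on all paths through `s` there is a past-or-current state at depth `t_v`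
satisfying `V_{i,a}` whose predecessor satisfies `E_a φ`, and
(2) at all past states with depth in `[t_b, t_v]`, `φ → V_{i,a}`. -/
def ViolA (M : NormModel) (tb tv : ℕ) (φ : M.W → Prop) (s : M.W) : Prop :=
  1 ≤ tv ∧ tv ≤ M.depth s ∧
  (∀ σ, M.PathThrough σ s → M.V (σ tv) ∧ M.Ea φ (σ (tv - 1))) ∧
  (∀ σ, M.PathThrough σ s → ∀ t, tb ≤ t → t ≤ tv → φ (σ t) → M.V (σ t))

/-- The common body of the omission-violation conditions, parametrised by the
"fulfilment or fresh violation" clause used in the counting condition (4). -/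
def ViolOBody (M : NormModel) (tb tv : ℕ) (φ : M.W → Prop) (s : M.W)
    (fresh : ℕ → (ℕ → M.W) → Prop) : Prop :=
  tv ≤ M.depth s ∧
  (∀ σ, M.PathThrough σ s → M.V (σ tv) ∧ M.D (σ tv)) ∧
  (∀ σ, M.PathThrough σ s → ∀ t, tb ≤ t → t ≤ tv → M.V (σ t) → ¬ φ (σ t)) ∧
  (∀ σ, M.PathThrough σ s → ∃ u, tb ≤ u ∧ u ≤ M.depth s ∧
    (M.D (σ u) ∨ u = tb) ∧
    ∀ t, u < t → t ≤ M.depth s → ¬ M.Ea φ (σ t) ∧ ¬ M.D (σ t)) ∧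
  (∀ σ, M.PathThrough σ s →
    ((Finset.Icc tb tv).filter (fun t => M.D (σ t))).card >
    ((Finset.Icc tb tv).filter (fun t => fresh t σ)).card)

/-- Auxiliary, fuel-indexed version of the omission-violation modality.
Since fresh omission-violations counted in condition (4) happen at strictly
smaller times, fuel `tv` suffices, and `ViolOAux tb φ tv tv s` is exactly the
intended fixed point. -/
def ViolOAux (M : NormModel) (tb : ℕ) (φ : M.W → Prop) : ℕ → ℕ → M.W → Prop
  | 0, tv, s => M.ViolOBody tb tv φ s (fun t σ => M.Ea φ (σ t))
  | fuel + 1, tv, s => M.ViolOBody tb tv φ s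
      (fun t σ => M.Ea φ (σ t) ∨ (t < tv ∧ M.ViolOAux tb φ fuel t (σ t)))

/-- Omission-violation `Viol^o_{i,a}(t_b, t_v, φ)` at `s`:
(1) a past-or-current `V ∧ D` state at depth `t_v` on all paths,
(2) `V_{i,a} → ¬φ` on `[t_b, t_v]`,
(3) `¬E_a φ ∧ ¬D_{i,a}` backwards until the last deadline or `t_b`,
(4) on each path, deadlines on `[t_b, t_v]` strictly outnumber states with
`E_a φ` or a fresh omission-violation of `φ`. -/
def ViolO (M : NormModel) (tb tv : ℕ) (φ : M.W → Prop) (s : M.W) : Prop :=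
  M.ViolOAux tb φ tv tv s

/-- A violation in general: by acting or by omission. -/
def Viol (M : NormModel) (tb tv : ℕ) (φ : M.W → Prop) (s : M.W) : Prop :=
  M.ViolA tb tv φ s ∨ M.ViolO tb tv φ s

/-- Repaired violation `RViol_{i,a}(t_b, t_v, t_r, φ)`. -/
def RViol (M : NormModel) (tb tv tr : ℕ) (φ : M.W → Prop) (s : M.W) : Prop :=
  M.Viol tb tv φ s ∧ tv ≤ tr ∧ tr ≤ M.depth s ∧
  (∀ σ, M.PathThrough σ s → M.Ea M.Rep (σ tr)) ∧
  (∀ σ, M.PathThrough σ s →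
    ((Finset.Icc tv tr).filter (fun t => M.Ea M.Rep (σ t))).card ≥
    ((Finset.Icc tb tv).filter (fun t => M.Viol tb t φ (σ t))).card)

/-- Punished violation `PViol_{i,a}(t_b, t_v, t_p, φ)`. -/
def PViol (M : NormModel) (tb tv tp : ℕ) (φ : M.W → Prop) (s : M.W) : Prop :=
  M.Viol tb tv φ s ∧ tv ≤ tp ∧ tp ≤ M.depth s ∧
  (∀ σ, M.PathThrough σ s → M.Ea M.Pun (σ tp)) ∧
  (∀ σ, M.PathThrough σ s →
    ((Finset.Icc tv tp).filter (fun t => M.Ea M.Pun (σ t))).card ≥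
    ((Finset.Icc tb tv).filter (fun t => M.Viol tb t φ (σ t))).card)

/-- Prohibition `F_{i,a}(t_b, φ)` at `s`: if the agent sees to it that `φ`,
then every successor state carries a fresh act-violation. -/
def Forb (M : NormModel) (tb : ℕ) (φ : M.W → Prop) (s : M.W) : Prop :=
  M.Ea φ s → ∀ s', M.R s s' → M.ViolA tb (M.depth s') φ s'

end NormModel

open NormModel

-- Counterexample model: the natural numbers as an infinite chain. -/
@[reducible] def chainModel : NormModel where
  W := ℕ
  root := 0
  R := fun n m => m = n + 1
  Ra := fun n m => m = n + 1
  hRa := fun _ _ h => h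
  depth := id
  hroot := rfl
  hdepth := fun _ _ h => h
  predUnique := fun _ _ _ h1 h2 => by omega
  reach := fun s => by
    induction s with
    | zero => exact Relation.ReflTransGen.refl
    | succ n ih => exact Relation.ReflTransGen.tail ih rfl
  V := fun x => x = 1
  D := fun _ => False
  Rep := fun _ => False
  Pun := fun _ => False

lemma chain_path_eq {σ : ℕ → ℕ} (h : chainModel.IsPath σ) : ∀ n, σ n = n := by
  intro n
  induction n with
  | zero => exact h.1
  | succ n ih => rw [h.2 n, ih]

/-- the act-violation modality is not closed under logical
consequence of its argument: `φ → ψ` everywhere and `Viol^a(t_b,t_v,φ)` at `s`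
do not yield `Viol^a(t_b,t_v,ψ)` at `s`. -/
theorem violA_not_closed_under_consequence :
    ∃ (M : NormModel) (s : M.W) (tb tv : ℕ) (φ ψ : M.W → Prop),
      (∀ x, φ x → ψ x) ∧ M.ViolA tb tv φ s ∧ ¬ M.ViolA tb tv ψ s := by
  refine ⟨chainModel, (1 : ℕ), 0, 1, fun x => x = 1, fun x => x = 1 ∨ x = 0, ?_, ?_, ?_⟩
  · intro x hx; exact Or.inl hx
  · refine ⟨le_refl 1, le_refl 1, ?_, ?_⟩
    · intro σ hσ
      have he := chain_path_eq hσ.1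
      refine ⟨by rw [he], ⟨?_, ?_⟩⟩
      · intro s' hs'
        have : σ (1 - 1) = 0 := he 0
        rw [this] at hs'
        exact hs'
      · intro h
        have := h 0
        simp at this
    · intro σ hσ t h0 h1 hφ
      exact hφ
  · intro ⟨_, _, _, h4⟩
    have hσ : chainModel.PathThrough (fun n => n) 1 := ⟨⟨rfl, fun n => rfl⟩, rfl⟩
    have := h4 _ hσ 0 (le_refl 0) (by norm_num) (Or.inr rfl)
    simp [chainModel] at this
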